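/- Let N ~ 𝒩(0, σ_N²) be a centered Gaussian random variable with σ_N ∈ (0,∞), let G(x) = x² and let β ∈ (0,∞). Then for every random variable X defined on the same probability space as N with E|X| < ∞, E X² ≤ β, and such that X+N has a law absolutely continuous with respect to Lebesgue measure with well-defined differential entropy, one has h(X+N) ≤ (1/2)·ln(2πe·(σ_N+√β)²), and equality is attained by the (fully dependent) input X† = (√β/σ_N)·N, for which X† ~ 𝒩(0,β), E (X†)² = β and Y† = X†+N ~ 𝒩(0, (σ_N+√β)²). In particular sup{h(Y): Y ∈ Σ(N;G,β)} = (1/2)·ln(2πe·(σ_N+√β)²). -/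

import Mathlib

open MeasureTheory Real Filter Set
open scoped ENNReal Topology ProbabilityTheory

noncomputable section

variable {Ω : Type*} [MeasureSpace Ω]

/-- `Z` has a law absolutely continuous w.r.t. Lebesgue measure, with density `p`. -/
def HasDens (Z : Ω → ℝ) (p : ℝ → ℝ) : Prop :=
  Measurable Z ∧ Measurable p ∧ (∀ x, 0 ≤ p x) ∧
    Measure.map Z (ℙ : Measure Ω) = volume.withDensity (fun x => ENNReal.ofReal (p x))

/-- Differential entropy of a density: `h = -∫ p ln p`. -/
def dEnt (p : ℝ → ℝ) : ℝ := -∫ y, p y * Real.log (p y)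

/-- The differential entropy of the density `p` is well defined: `∫ p |ln p| < ∞`. -/
def EntWellDef (p : ℝ → ℝ) : Prop := Integrable (fun y => p y * Real.log (p y))

/-- The real points of the open interval `(a,b)` with extended-real endpoints. -/
def eIoo (a b : EReal) : Set ℝ := {x : ℝ | a < (x : EReal) ∧ (x : EReal) < b}

/-- The noise class `𝔑(a,b)`: `N` takes values in the closure of `(a,b)`, is integrable,
has a Lebesgue density `pN` which is `C¹` and strictly positive on `(a,b)` and vanishes
outside, and has well-defined differential entropy. -/
structure IsNoise (a b : EReal) (N : Ω → ℝ) (pN : ℝ → ℝ) : Prop where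
  prob : IsProbabilityMeasure (ℙ : Measure Ω)
  lt : a < b
  mem : ∀ᵐ ω ∂(ℙ : Measure Ω), a ≤ (N ω : EReal) ∧ (N ω : EReal) ≤ b
  int : Integrable N (ℙ : Measure Ω)
  dens : HasDens N pN
  smooth : ContDiffOn ℝ 1 pN (eIoo a b)
  pos : ∀ x ∈ eIoo a b, 0 < pN x
  zero : ∀ x ∉ eIoo a b, pN x = 0
  went : EntWellDef pN

/-- Cost function: `C¹`, convex, with derivative a.e. nonzero. -/
structure IsCost (G : ℝ → ℝ) : Prop where
  smooth : ContDiff ℝ 1 G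
  convex : ConvexOn ℝ Set.univ G
  dne : ∀ᵐ x ∂(volume : Measure ℝ), deriv G x ≠ 0

/-- `β ∈ I_G = (inf G, ∞)`, i.e. `β` is strictly above the infimum of `G`. -/
def InIG (G : ℝ → ℝ) (β : ℝ) : Prop := ∃ x, G x < β

/-- Admissible input: integrable, with integrable cost and average cost at most `β`. -/
def Admissible (G : ℝ → ℝ) (β : ℝ) (X : Ω → ℝ) : Prop :=
  Measurable X ∧ Integrable X (ℙ : Measure Ω) ∧
    Integrable (fun ω => G (X ω)) (ℙ : Measure Ω) ∧
    (∫ ω, G (X ω) ∂(ℙ : Measure Ω)) ≤ β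

/-- The set of achievable output entropies `{h(Y) : Y ∈ Σ(N;G,β)}` (joint couplings). -/
def SigmaEnt (N : Ω → ℝ) (G : ℝ → ℝ) (β : ℝ) : Set ℝ :=
  {h | ∃ (X : Ω → ℝ) (pY : ℝ → ℝ), Admissible G β X ∧
        HasDens (fun ω => X ω + N ω) pY ∧ EntWellDef pY ∧ h = dEnt pY}

/-- The set of achievable output entropies `{h(Y) : Y ∈ Σ_⊥(N;G,β)}` (independent input). -/
def SigmaEntIndep (N : Ω → ℝ) (G : ℝ → ℝ) (β : ℝ) : Set ℝ :=
  {h | ∃ (X : Ω → ℝ) (pY : ℝ → ℝ), Admissible G β X ∧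
        ProbabilityTheory.IndepFun X N (ℙ : Measure Ω) ∧
        HasDens (fun ω => X ω + N ω) pY ∧ EntWellDef pY ∧ h = dEnt pY}

/-- Achievable output entropies with an additional amplitude constraint `X ∈ s` a.s. -/
def SigmaEntAmp (N : Ω → ℝ) (G : ℝ → ℝ) (β : ℝ) (s : Set ℝ) : Set ℝ :=
  {h | ∃ (X : Ω → ℝ) (pY : ℝ → ℝ), Admissible G β X ∧
        (∀ᵐ ω ∂(ℙ : Measure Ω), X ω ∈ s) ∧
        HasDens (fun ω => X ω + N ω) pY ∧ EntWellDef pY ∧ h = dEnt pY}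

/-- The filter of real numbers approaching the extended-real endpoint `a` from the right. -/
def rightNhds (a : EReal) : Filter ℝ :=
  Filter.comap (fun x : ℝ => (x : EReal)) (nhdsWithin a (Set.Ioi a))

/-- The filter of real numbers approaching the extended-real endpoint `b` from the left. -/
def leftNhds (b : EReal) : Filter ℝ :=
  Filter.comap (fun x : ℝ => (x : EReal)) (nhdsWithin b (Set.Iio b))

/-- The hypotheses of Theorem 1: constants `C, λ > 0`, a `C¹` curve `g` with derivative `g'`
and a primitive `Φ` of `G' ∘ g`, satisfying the first integral of the Euler–Lagrange
equation, the natural boundary conditions, the isoperimetric constraint `E G(g(N)) = β`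
and `E|g(N)| < ∞`. -/
structure FirstIntegral (a b : EReal) (N : Ω → ℝ) (pN G : ℝ → ℝ) (β : ℝ)
    (C lam : ℝ) (g g' Φ : ℝ → ℝ) : Prop where
  hC : 0 < C
  hlam : 0 < lam
  hgmeas : Measurable g
  hg : ∀ n ∈ eIoo a b, HasDerivAt g (g' n) n
  hg' : ContinuousOn g' (eIoo a b)
  hΦ : ∀ n ∈ eIoo a b, HasDerivAt Φ (deriv G (g n)) n
  heq : ∀ n ∈ eIoo a b, pN n = C * (1 + g' n) * Real.exp (-(lam * (Φ n + G (g n))))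
  hbl : Filter.Tendsto (fun n => pN n / (1 + g' n))
    (rightNhds a ⊓ Filter.principal (eIoo a b)) (nhds 0)
  hbr : Filter.Tendsto (fun n => pN n / (1 + g' n))
    (leftNhds b ⊓ Filter.principal (eIoo a b)) (nhds 0)
  hGint : Integrable (fun ω => G (g (N ω))) (ℙ : Measure Ω)
  hcost : (∫ ω, G (g (N ω)) ∂(ℙ : Measure Ω)) = β
  hgint : Integrable (fun ω => g (N ω)) (ℙ : Measure Ω)

/-- Fourier transform of a finite Borel measure on `ℝ`: `F[μ](f) = ∫ e^{-2πifξ} dμ(ξ)`. -/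
def charF (μ : Measure ℝ) (f : ℝ) : ℂ :=
  ∫ ξ, Complex.exp (Complex.ofReal (-(2 * Real.pi * f * ξ)) * Complex.I) ∂μ

/-- Positive definiteness of a complex-valued function on `ℝ`: every Hermitian sum
`∑_{l,m} φ(f_l - f_m) z_l z̄_m` is a nonnegative real number. -/
def PosDefFn (φ : ℝ → ℂ) : Prop :=
  ∀ (n : ℕ) (f : Fin n → ℝ) (z : Fin n → ℂ),
    0 ≤ (∑ l, ∑ m, φ (f l - f m) * z l * (starRingEnd ℂ) (z m)).re ∧
    (∑ l, ∑ m, φ (f l - f m) * z l * (starRingEnd ℂ) (z m)).im = 0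



lemma L0 {b : ℝ} (hb : 0 < b) :
    ∫ x : ℝ, x ^ 2 * rexp (-b * x ^ 2) = Real.sqrt (π / b) / (2 * b) := by
  have hint2 : Integrable (fun x : ℝ => x ^ 2 * rexp (-b * x ^ 2)) := by
    have h := integrable_rpow_mul_exp_neg_mul_sq hb (s := 2) (by norm_num)
    have : ∀ x : ℝ, x ^ (2:ℝ) = x ^ 2 := fun x => by
      rw [show (2:ℝ) = ((2:ℕ):ℝ) by norm_num, Real.rpow_natCast]
    simpa [this] using h
  have hint1 : Integrable (fun x : ℝ => rexp (-b * x ^ 2)) := integrable_exp_neg_mul_sq hb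
  have hderiv : ∀ x : ℝ, HasDerivAt (fun x : ℝ => x * rexp (-b * x ^ 2))
      (rexp (-b * x ^ 2) - 2 * b * (x ^ 2 * rexp (-b * x ^ 2))) x := by
    intro x
    have h1 : HasDerivAt (fun x : ℝ => rexp (-b * x ^ 2)) (rexp (-b * x ^ 2) * (-b * (2 * x))) x := by
      have := ((hasDerivAt_pow 2 x).const_mul (-b)).exp
      simpa using this
    have := (hasDerivAt_id x).mul h1
    simp only [id, Pi.mul_def] at this
    exact this.congr_deriv (by ring)
  have hintf : Integrable (fun x : ℝ => x * rexp (-b * x ^ 2)) := integrable_mul_exp_neg_mul_sq hb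
  have hzero : ∫ x : ℝ, (rexp (-b * x ^ 2) - 2 * b * (x ^ 2 * rexp (-b * x ^ 2))) = 0 :=
    integral_eq_zero_of_hasDerivAt_of_integrable hderiv
      (hint1.sub ((hint2.const_mul _))) hintf
  rw [integral_sub hint1 (hint2.const_mul _), integral_const_mul, integral_gaussian] at hzero
  have h2b : (2 * b) ≠ 0 := by positivity
  field_simp at hzero ⊢
  linarith

open ProbabilityTheory in
lemma gq_eq {v : ℝ} (hv : 0 < v) (x : ℝ) :
    gaussianPDFReal 0 v.toNNReal x
      = (Real.sqrt (2 * π * v))⁻¹ * rexp (-(2 * v)⁻¹ * x ^ 2) := by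
  rw [gaussianPDFReal]
  rw [Real.coe_toNNReal _ hv.le]
  congr 1
  rw [sub_zero]
  congr 1
  field_simp

open ProbabilityTheory in
lemma gq_sqrt_pos {v : ℝ} (hv : 0 < v) : 0 < Real.sqrt (2 * π * v) :=
  Real.sqrt_pos.mpr (by positivity)

open ProbabilityTheory in
lemma gq_pos {v : ℝ} (hv : 0 < v) (x : ℝ) : 0 < gaussianPDFReal 0 v.toNNReal x :=
  gaussianPDFReal_pos _ _ _ (by simp [Real.toNNReal_eq_zero, not_le, hv])

open ProbabilityTheory in
lemma gq_int {v : ℝ} (hv : 0 < v) : Integrable (gaussianPDFReal 0 v.toNNReal) :=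
  integrable_gaussianPDFReal _ _

open ProbabilityTheory in
lemma gq_integral_one {v : ℝ} (hv : 0 < v) : ∫ x, gaussianPDFReal 0 v.toNNReal x = 1 :=
  integral_gaussianPDFReal_eq_one _ (by simp [Real.toNNReal_eq_zero, not_le, hv])

-- second moment
open ProbabilityTheory in
lemma gq_sq_int {v : ℝ} (hv : 0 < v) :
    Integrable (fun x => x ^ 2 * gaussianPDFReal 0 v.toNNReal x) := by
  have hb : 0 < (2*v)⁻¹ := by positivity
  have h := integrable_rpow_mul_exp_neg_mul_sq hb (s := 2) (by norm_num)
  have h2 : ∀ x : ℝ, x ^ (2:ℝ) = x ^ 2 := fun x => by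
    rw [show (2:ℝ) = ((2:ℕ):ℝ) by norm_num, Real.rpow_natCast]
  simp only [h2] at h
  have := h.const_mul (Real.sqrt (2 * π * v))⁻¹
  exact this.congr (Filter.Eventually.of_forall fun x => by simp only [gq_eq hv]; ring)

open ProbabilityTheory in
lemma gq_sq_integral {v : ℝ} (hv : 0 < v) :
    ∫ x, x ^ 2 * gaussianPDFReal 0 v.toNNReal x = v := by
  have hb : 0 < (2*v)⁻¹ := by positivity
  simp only [gq_eq hv]
  have : ∀ x : ℝ, x ^ 2 * ((Real.sqrt (2 * π * v))⁻¹ * rexp (-(2 * v)⁻¹ * x ^ 2))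
      = (Real.sqrt (2 * π * v))⁻¹ * (x ^ 2 * rexp (-(2 * v)⁻¹ * x ^ 2)) := fun x => by ring
  simp only [this]
  rw [integral_const_mul, L0 hb]
  rw [show π / (2*v)⁻¹ = 2 * π * v by field_simp]
  have hs := gq_sqrt_pos hv
  rw [show (2 * (2*v)⁻¹ : ℝ) = v⁻¹ by field_simp]
  field_simp

open ProbabilityTheory in
lemma gq_abs_int {v : ℝ} (hv : 0 < v) :
    Integrable (fun x => x * gaussianPDFReal 0 v.toNNReal x) := by
  have hb : 0 < (2*v)⁻¹ := by positivity
  have := (integrable_mul_exp_neg_mul_sq hb).const_mul (Real.sqrt (2 * π * v))⁻¹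
  exact this.congr (Filter.Eventually.of_forall fun x => by simp only [gq_eq hv]; ring)

open ProbabilityTheory in
lemma gq_log {v : ℝ} (hv : 0 < v) (x : ℝ) :
    Real.log (gaussianPDFReal 0 v.toNNReal x)
      = -(1/2) * Real.log (2 * π * v) - x ^ 2 / (2 * v) := by
  rw [gq_eq hv, Real.log_mul (by positivity) (Real.exp_ne_zero _), Real.log_inv,
    Real.log_exp, Real.log_sqrt (by positivity)]
  field_simp
  ring

open ProbabilityTheory in
lemma gq_entwell {v : ℝ} (hv : 0 < v) :
    Integrable (fun x => gaussianPDFReal 0 v.toNNReal x * Real.log (gaussianPDFReal 0 v.toNNReal x)) := by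
  have h1 := (gq_int hv).const_mul (-(1/2) * Real.log (2 * π * v))
  have h2 := (gq_sq_int hv).const_mul (2*v)⁻¹
  exact (h1.sub h2).congr (Filter.Eventually.of_forall fun x => by
    simp only [Pi.sub_apply]
    rw [gq_log hv]
    field_simp)

open ProbabilityTheory in
lemma gq_entropy {v : ℝ} (hv : 0 < v) :
    -∫ x, gaussianPDFReal 0 v.toNNReal x * Real.log (gaussianPDFReal 0 v.toNNReal x)
      = (1/2) * Real.log (2 * π * Real.exp 1 * v) := by
  have h1 := (gq_int hv).const_mul (-(1/2) * Real.log (2 * π * v))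
  have h2 := (gq_sq_int hv).const_mul (2*v)⁻¹
  have heq : (fun x => gaussianPDFReal 0 v.toNNReal x * Real.log (gaussianPDFReal 0 v.toNNReal x))
      = fun x => (-(1/2) * Real.log (2 * π * v)) * gaussianPDFReal 0 v.toNNReal x
        - (2*v)⁻¹ * (x ^ 2 * gaussianPDFReal 0 v.toNNReal x) := by
    funext x
    rw [gq_log hv]
    field_simp
  rw [heq, integral_sub h1 h2, integral_const_mul, integral_const_mul, gq_integral_one hv,
    gq_sq_integral hv]
  have hlog : Real.log (2 * π * Real.exp 1 * v) = Real.log (2 * π * v) + 1 := by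
    rw [show 2 * π * Real.exp 1 * v = (2 * π * v) * Real.exp 1 by ring,
      Real.log_mul (by positivity) (Real.exp_ne_zero _), Real.log_exp]
  rw [hlog]
  field_simp
  ring

open ProbabilityTheory in
lemma maxent {v : ℝ} (hv : 0 < v) {p : ℝ → ℝ}
    (hnn : ∀ x, 0 ≤ p x)
    (hint : Integrable p) (hone : ∫ x, p x = 1)
    (hsqint : Integrable (fun x => x ^ 2 * p x)) (hsq : ∫ x, x ^ 2 * p x ≤ v)
    (hent : Integrable (fun x => p x * Real.log (p x))) :
    -∫ x, p x * Real.log (p x) ≤ (1/2) * Real.log (2 * π * Real.exp 1 * v) := by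
  set q := gaussianPDFReal 0 v.toNNReal with hqdef
  have hplq : (fun x => p x * Real.log (q x))
      = fun x => (-(1/2) * Real.log (2 * π * v)) * p x - (2*v)⁻¹ * (x ^ 2 * p x) := by
    funext x
    rw [hqdef, gq_log hv]
    field_simp
  have hplq_int : Integrable (fun x => p x * Real.log (q x)) := by
    rw [hplq]
    exact (hint.const_mul _).sub (hsqint.const_mul _)
  have key : ∀ x, p x * Real.log (q x) - p x * Real.log (p x) ≤ q x - p x := by
    intro x
    rcases eq_or_lt_of_le (hnn x) with h0 | h0
    · simp only [← h0, zero_mul, sub_zero, sub_self]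
      exact (gq_pos hv x).le
    · have hq := gq_pos hv x
      have hlog := Real.log_le_sub_one_of_pos (show 0 < q x / p x by positivity)
      rw [Real.log_div hq.ne' h0.ne'] at hlog
      have h2 := mul_le_mul_of_nonneg_left hlog h0.le
      have h3 : p x * (q x / p x - 1) = q x - p x := by field_simp
      nlinarith
  have hmono := integral_mono (hplq_int.sub hent) ((gq_int hv).sub hint)
    (fun x => key x)
  simp only [Pi.sub_apply] at hmono
  rw [integral_sub hplq_int hent, integral_sub (gq_int hv) hint, hone,
    ← hqdef, gq_integral_one hv, sub_self] at hmono
  have hcross : ∫ x, p x * Real.log (q x)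
      = (-(1/2) * Real.log (2 * π * v)) - (2*v)⁻¹ * ∫ x, x ^ 2 * p x := by
    rw [hplq, integral_sub (hint.const_mul _) (hsqint.const_mul _),
      integral_const_mul, integral_const_mul, hone, mul_one]
  have hlog : Real.log (2 * π * Real.exp 1 * v) = Real.log (2 * π * v) + 1 := by
    rw [show 2 * π * Real.exp 1 * v = (2 * π * v) * Real.exp 1 by ring,
      Real.log_mul (by positivity) (Real.exp_ne_zero _), Real.log_exp]
  have hb : (0:ℝ) < (2*v)⁻¹ := by positivity
  have : (2*v)⁻¹ * ∫ x, x ^ 2 * p x ≤ (2*v)⁻¹ * v := by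
    exact mul_le_mul_of_nonneg_left hsq hb.le
  have hvv : (2*v)⁻¹ * v = 1/2 := by field_simp
  rw [hcross] at hmono
  rw [hlog]
  linarith


open ProbabilityTheory in
lemma gauss_withDensity {v : ℝ} (hv : 0 < v) :
    gaussianReal 0 v.toNNReal
      = volume.withDensity (fun x => ENNReal.ofReal (gaussianPDFReal 0 v.toNNReal x)) := by
  rw [gaussianReal_of_var_ne_zero _ (by simp [Real.toNNReal_eq_zero, not_le, hv])]
  rfl

lemma hasDens_integrable_iff {Ω : Type*} [MeasureSpace Ω]
    {Z : Ω → ℝ} {p : ℝ → ℝ} (h : HasDens Z p) {g : ℝ → ℝ} (hg : Measurable g) :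
    Integrable (fun ω => g (Z ω)) (ℙ : Measure Ω) ↔ Integrable (fun x => g x * p x) := by
  obtain ⟨hZ, hp, hnn, hlaw⟩ := h
  have h1 : Integrable (fun ω => g (Z ω)) (ℙ : Measure Ω)
      ↔ Integrable g (Measure.map Z ℙ) :=
    (integrable_map_measure hg.aestronglyMeasurable hZ.aemeasurable).symm
  rw [h1, hlaw, integrable_withDensity_iff hp.ennreal_ofReal
    (Filter.Eventually.of_forall fun x => ENNReal.ofReal_lt_top)]
  exact integrable_congr (Filter.Eventually.of_forall fun x => by
    simp only [ENNReal.toReal_ofReal (hnn x)])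

lemma hasDens_integral {Ω : Type*} [MeasureSpace Ω]
    {Z : Ω → ℝ} {p : ℝ → ℝ} (h : HasDens Z p) {g : ℝ → ℝ} (hg : Measurable g) :
    ∫ ω, g (Z ω) ∂(ℙ : Measure Ω) = ∫ x, g x * p x := by
  obtain ⟨hZ, hp, hnn, hlaw⟩ := h
  rw [← integral_map hZ.aemeasurable hg.aestronglyMeasurable, hlaw]
  rw [show (fun x => ENNReal.ofReal (p x)) = (fun x => ((p x).toNNReal : ℝ≥0∞)) from rfl]
  rw [integral_withDensity_eq_integral_smul hp.real_toNNReal g]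
  congr 1
  funext x
  rw [NNReal.smul_def, smul_eq_mul, Real.coe_toNNReal _ (hnn x), mul_comm]

lemma hasDens_pdf_int {Ω : Type*} [MeasureSpace Ω] [IsProbabilityMeasure (ℙ : Measure Ω)]
    {Z : Ω → ℝ} {p : ℝ → ℝ} (h : HasDens Z p) :
    Integrable p ∧ ∫ x, p x = 1 := by
  obtain ⟨hZ, hp, hnn, hlaw⟩ := h
  have hone : ∫⁻ x, ENNReal.ofReal (p x) = 1 := by
    have : (Measure.map Z (ℙ : Measure Ω)) Set.univ = 1 := by
      have : IsProbabilityMeasure (Measure.map Z (ℙ : Measure Ω)) :=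
        Measure.isProbabilityMeasure_map hZ.aemeasurable
      exact this.measure_univ
    rw [hlaw, withDensity_apply _ MeasurableSet.univ, Measure.restrict_univ] at this
    exact this
  have hint : Integrable p := by
    refine ⟨hp.aestronglyMeasurable, ?_⟩
    rw [hasFiniteIntegral_iff_norm]
    have : ∀ x, ENNReal.ofReal ‖p x‖ = ENNReal.ofReal (p x) := fun x => by
      rw [Real.norm_eq_abs, abs_of_nonneg (hnn x)]
    simp only [this, hone]
    exact ENNReal.one_lt_top
  refine ⟨hint, ?_⟩
  rw [integral_eq_lintegral_of_nonneg_ae (Filter.Eventually.of_forall hnn)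
    hp.aestronglyMeasurable, hone]
  simp

/-- Gaussian noise, quadratic cost: for `N ~ 𝒩(0, σ²)` and power
budget `β > 0`, every (possibly dependent) input with `E X² ≤ β` satisfies
`h(X+N) ≤ (1/2) ln(2πe(σ+√β)²)`, with equality for `X† = (√β/σ)·N`, for which
`X† ~ 𝒩(0,β)`, `E(X†)² = β` and `Y† = X†+N ~ 𝒩(0,(σ+√β)²)`; in particular
`sup{h(Y) : Y ∈ Σ(N;x²,β)} = (1/2) ln(2πe(σ+√β)²)`. -/
theorem gaussian_noise_quadratic_cost
    {Ω : Type*} [MeasureSpace Ω] [IsProbabilityMeasure (ℙ : Measure Ω)]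
    (N : Ω → ℝ) (σ : ℝ) (hσ : 0 < σ)
    (hNmeas : Measurable N)
    (hNlaw : Measure.map N (ℙ : Measure Ω) =
      ProbabilityTheory.gaussianReal 0 (Real.toNNReal (σ ^ 2)))
    (β : ℝ) (hβ : 0 < β) :
    (∀ (X : Ω → ℝ) (pY : ℝ → ℝ), Measurable X → Integrable X (ℙ : Measure Ω) →
      Integrable (fun ω => (X ω) ^ 2) (ℙ : Measure Ω) →
      (∫ ω, (X ω) ^ 2 ∂(ℙ : Measure Ω)) ≤ β →
      HasDens (fun ω => X ω + N ω) pY → EntWellDef pY →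
      dEnt pY ≤ (1 / 2) * Real.log (2 * Real.pi * Real.exp 1 * (σ + Real.sqrt β) ^ 2)) ∧
    Measure.map (fun ω => (Real.sqrt β / σ) * N ω) (ℙ : Measure Ω) =
      ProbabilityTheory.gaussianReal 0 (Real.toNNReal β) ∧
    (∫ ω, ((Real.sqrt β / σ) * N ω) ^ 2 ∂(ℙ : Measure Ω)) = β ∧
    Measure.map (fun ω => (Real.sqrt β / σ) * N ω + N ω) (ℙ : Measure Ω) =
      ProbabilityTheory.gaussianReal 0 (Real.toNNReal ((σ + Real.sqrt β) ^ 2)) ∧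
    (∃ pY : ℝ → ℝ, HasDens (fun ω => (Real.sqrt β / σ) * N ω + N ω) pY ∧
      EntWellDef pY ∧
      dEnt pY = (1 / 2) * Real.log (2 * Real.pi * Real.exp 1 * (σ + Real.sqrt β) ^ 2)) ∧
    sSup (SigmaEnt N (fun x => x ^ 2) β) =
      (1 / 2) * Real.log (2 * Real.pi * Real.exp 1 * (σ + Real.sqrt β) ^ 2) := by
    classical
  have hb2 : (0:ℝ) ≤ β := hβ.le
  have hsb : Real.sqrt β * Real.sqrt β = β := Real.mul_self_sqrt hb2
  have hsbpos : 0 < Real.sqrt β := Real.sqrt_pos.mpr hβ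
  set V : ℝ := (σ + Real.sqrt β) ^ 2 with hVdef
  have hV : 0 < V := by positivity
  have hσ2 : (0:ℝ) < σ ^ 2 := by positivity
  have hNdens : HasDens N (ProbabilityTheory.gaussianPDFReal 0 (σ ^ 2).toNNReal) :=
    ⟨hNmeas, ProbabilityTheory.measurable_gaussianPDFReal _ _,
      fun x => ProbabilityTheory.gaussianPDFReal_nonneg _ _ _,
      by rw [hNlaw, gauss_withDensity hσ2]⟩
  have hN2int : Integrable (fun ω => (N ω) ^ 2) (ℙ : Measure Ω) :=
    (hasDens_integrable_iff hNdens (measurable_id.pow_const 2)).mpr (gq_sq_int hσ2)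
  have hN2 : ∫ ω, (N ω) ^ 2 ∂(ℙ : Measure Ω) = σ ^ 2 := by
    rw [hasDens_integral hNdens (g := fun x => x ^ 2) (measurable_id.pow_const 2),
      gq_sq_integral hσ2]
  have hNint : Integrable N (ℙ : Measure Ω) :=
    (hasDens_integrable_iff hNdens measurable_id).mpr (gq_abs_int hσ2)
  -- Part 1 : the entropy bound
  have part1 : ∀ (X : Ω → ℝ) (pY : ℝ → ℝ), Measurable X → Integrable X (ℙ : Measure Ω) →
      Integrable (fun ω => (X ω) ^ 2) (ℙ : Measure Ω) →
      (∫ ω, (X ω) ^ 2 ∂(ℙ : Measure Ω)) ≤ β →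
      HasDens (fun ω => X ω + N ω) pY → EntWellDef pY →
      dEnt pY ≤ (1 / 2) * Real.log (2 * π * Real.exp 1 * V) := by
    intro X pY hXm hXint hX2int hX2le hdens hwell
    obtain ⟨hpint, hpone⟩ := hasDens_pdf_int hdens
    have hpnn := hdens.2.2.1
    set t : ℝ := σ / Real.sqrt β with htdef
    have ht : 0 < t := by positivity
    have hptw : ∀ ω, (X ω + N ω) ^ 2 ≤ (1+t) * (X ω) ^ 2 + (1+t⁻¹) * (N ω) ^ 2 := by
      intro ω
      have h1 := sq_nonneg (t * X ω - N ω)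
      have h3 : t * t⁻¹ = 1 := mul_inv_cancel₀ ht.ne'
      have h4 : t * (X ω + N ω) ^ 2 ≤ t * ((1+t) * (X ω) ^ 2 + (1+t⁻¹) * (N ω) ^ 2) := by
        nlinarith
      exact le_of_mul_le_mul_left h4 ht
    have hY2int : Integrable (fun ω => (X ω + N ω) ^ 2) (ℙ : Measure Ω) := by
      apply Integrable.mono ((hX2int.const_mul (1+t)).add (hN2int.const_mul (1+t⁻¹)))
        (((hXm.add hNmeas).pow_const 2).aestronglyMeasurable)
      apply Filter.Eventually.of_forall
      intro ω
      rw [Real.norm_eq_abs, Real.norm_eq_abs, abs_of_nonneg (sq_nonneg _)]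
      exact (hptw ω).trans (le_abs_self _)
    have hY2le : ∫ ω, (X ω + N ω) ^ 2 ∂(ℙ : Measure Ω) ≤ V := by
      have hmono := integral_mono hY2int
        ((hX2int.const_mul (1+t)).add (hN2int.const_mul (1+t⁻¹))) hptw
      simp only [Pi.add_apply] at hmono
      have e1 : ∫ a, ((1+t) * (X a) ^ 2 + (1+t⁻¹) * (N a) ^ 2) ∂(ℙ : Measure Ω)
          = (1+t) * (∫ a, (X a) ^ 2 ∂(ℙ : Measure Ω)) + (1+t⁻¹) * σ ^ 2 := by
        rw [integral_add (hX2int.const_mul _) (hN2int.const_mul _), integral_const_mul,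
          integral_const_mul, hN2]
      rw [e1] at hmono
      have h1 : (1+t) * ∫ ω, (X ω) ^ 2 ∂(ℙ : Measure Ω) ≤ (1+t) * β :=
        mul_le_mul_of_nonneg_left hX2le (by positivity)
      have hVeq : (1+t) * β + (1+t⁻¹) * σ ^ 2 = V := by
        rw [htdef, hVdef]
        field_simp
        nlinarith [hsb, hσ2, hsbpos]
      linarith
    have hY2sq : Integrable (fun x => x ^ 2 * pY x) :=
      (hasDens_integrable_iff hdens (measurable_id.pow_const 2)).mp hY2int
    have hY2eq : ∫ x, x ^ 2 * pY x = ∫ ω, (X ω + N ω) ^ 2 ∂(ℙ : Measure Ω) :=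
      (hasDens_integral hdens (g := fun x => x ^ 2) (measurable_id.pow_const 2)).symm
    exact maxent hV hpnn hpint hpone hY2sq (by rw [hY2eq]; exact hY2le) hwell
  -- the optimal input
  set c : ℝ := Real.sqrt β / σ with hcdef
  have hc2 : c ^ 2 * σ ^ 2 = β := by
    rw [hcdef]
    field_simp
    exact Real.sq_sqrt hb2
  have hc1 : (c + 1) ^ 2 * σ ^ 2 = V := by
    rw [hcdef, hVdef]
    field_simp
    ring
  have hmapc : Measure.map (fun ω => c * N ω) (ℙ : Measure Ω)
      = ProbabilityTheory.gaussianReal 0 β.toNNReal := by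
    rw [show (fun ω => c * N ω) = ((c * ·) ∘ N) from rfl,
      ← Measure.map_map (measurable_const_mul c) hNmeas, hNlaw,
      ProbabilityTheory.gaussianReal_map_const_mul]
    congr 1
    · ring
    · apply NNReal.coe_injective
      push_cast
      rw [Real.coe_toNNReal _ hσ2.le, Real.coe_toNNReal _ hb2]
      exact hc2
  have hmom : ∫ ω, (c * N ω) ^ 2 ∂(ℙ : Measure Ω) = β := by
    simp only [mul_pow]
    rw [integral_const_mul, hN2, hc2]
  have hmapY : Measure.map (fun ω => c * N ω + N ω) (ℙ : Measure Ω)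
      = ProbabilityTheory.gaussianReal 0 V.toNNReal := by
    rw [show (fun ω => c * N ω + N ω) = (((c + 1) * ·) ∘ N) from by funext ω; simp; ring,
      ← Measure.map_map (measurable_const_mul (c + 1)) hNmeas, hNlaw,
      ProbabilityTheory.gaussianReal_map_const_mul]
    congr 1
    · ring
    · apply NNReal.coe_injective
      push_cast
      rw [Real.coe_toNNReal _ hσ2.le, Real.coe_toNNReal _ hV.le]
      exact hc1
  have hdensY : HasDens (fun ω => c * N ω + N ω) (ProbabilityTheory.gaussianPDFReal 0 V.toNNReal) :=
    ⟨(hNmeas.const_mul c).add hNmeas, ProbabilityTheory.measurable_gaussianPDFReal _ _,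
      fun x => ProbabilityTheory.gaussianPDFReal_nonneg _ _ _,
      by rw [hmapY, gauss_withDensity hV]⟩
  have hdentY : dEnt (ProbabilityTheory.gaussianPDFReal 0 V.toNNReal)
      = (1 / 2) * Real.log (2 * π * Real.exp 1 * V) := gq_entropy hV
  have hM_mem : (1 / 2) * Real.log (2 * π * Real.exp 1 * V)
      ∈ SigmaEnt N (fun x => x ^ 2) β := by
    refine ⟨fun ω => c * N ω, ProbabilityTheory.gaussianPDFReal 0 V.toNNReal,
      ⟨hNmeas.const_mul c, hNint.const_mul c, ?_, ?_⟩, hdensY, gq_entwell hV, hdentY.symm⟩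
    · simpa [mul_pow] using hN2int.const_mul (c ^ 2)
    · exact le_of_eq hmom
  have hub : ∀ h ∈ SigmaEnt N (fun x => x ^ 2) β,
      h ≤ (1 / 2) * Real.log (2 * π * Real.exp 1 * V) := by
    rintro h ⟨X, pY, ⟨hXm, hXint, hGint, hcost⟩, hdens, hwell, rfl⟩
    exact part1 X pY hXm hXint hGint hcost hdens hwell
  refine ⟨part1, hmapc, hmom, hmapY,
    ⟨ProbabilityTheory.gaussianPDFReal 0 V.toNNReal, hdensY, gq_entwell hV, hdentY⟩, ?_⟩
  exact le_antisymm
    (csSup_le ⟨_, hM_mem⟩ hub)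
    (le_csSup ⟨_, hub⟩ hM_mem)
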